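/- Let G = (V, E) be a finite graph each of whose connected components is a path or a cycle, with k components in total, and let S ⊆ V. Let T^S ⊆ S denote the set of vertices of S having at least 2 neighbors in S. If, regarding V, S, k as random with common underlying probability space over a fixed finite universe U (with S ⊆ V ⊆ U) and Pr[I ∈ S | I ∈ V] ≥ p > 2/3 for all I ∈ U, then E[|V|] ≤ (2E[k] + E[|T^S|])/(3p - 2). -/

import Mathlib

open MeasureTheory

section Aux

open Finset

set_option linter.unusedSectionVars false

variable {U : Type*} [Fintype U] [DecidableEq U]

/-- Walk lemma: deleting one edge, any `G`-walk endpoint stays reachable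
to the other end or to one of the two deleted-edge endpoints. -/
lemma walk_delete {G : SimpleGraph U} {a b : U} {x y : U}
    (p : G.Walk x y) :
    (G.deleteEdges {s(a,b)}).Reachable x y ∨
      (G.deleteEdges {s(a,b)}).Reachable x a ∨
      (G.deleteEdges {s(a,b)}).Reachable x b := by
  induction p with
  | nil => exact Or.inl (SimpleGraph.Reachable.refl _)
  | @cons u v w h p ih =>
    by_cases he : s(u,v) = s(a,b)
    · rw [Sym2.eq_iff] at he
      rcases he with ⟨rfl, rfl⟩ | ⟨rfl, rfl⟩
      · exact Or.inr (Or.inl (SimpleGraph.Reachable.refl _))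
      · exact Or.inr (Or.inr (SimpleGraph.Reachable.refl _))
    · have hadj : (G.deleteEdges {s(a,b)}).Adj u v := by
        simp [SimpleGraph.deleteEdges_adj, h, he]
      rcases ih with h1 | h1 | h1
      · exact Or.inl (hadj.reachable.trans h1)
      · exact Or.inr (Or.inl (hadj.reachable.trans h1))
      · exact Or.inr (Or.inr (hadj.reachable.trans h1))

/-- number of components meeting V grows by at most 1 when deleting an edge -/
lemma comp_delete (G : SimpleGraph U) (a b : U) (V : Finset U) :
    Nat.card {C : (G.deleteEdges {s(a,b)}).ConnectedComponent //
        ∃ v ∈ V, (G.deleteEdges {s(a,b)}).connectedComponentMk v = C} ≤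
      Nat.card {C : G.ConnectedComponent //
        ∃ v ∈ V, G.connectedComponentMk v = C} + 1 := by
  classical
  set G' := G.deleteEdges {s(a,b)} with hG'
  have hle : G' ≤ G := by
    intro u v h
    rw [hG', SimpleGraph.deleteEdges_adj] at h
    exact h.1
  set K := {C : G.ConnectedComponent // ∃ v ∈ V, G.connectedComponentMk v = C}
  set K' := {C : G'.ConnectedComponent // ∃ v ∈ V, G'.connectedComponentMk v = C}
  -- the map
  set Ca := G'.connectedComponentMk a
  have hmem : ∀ C : K', ∃ v ∈ V,
      G.connectedComponentMk v = C.1.map (SimpleGraph.Hom.ofLE hle) := by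
    rintro ⟨C, v, hv, rfl⟩
    refine ⟨v, hv, ?_⟩
    exact (SimpleGraph.ConnectedComponent.map_mk (SimpleGraph.Hom.ofLE hle) v).symm
  set φ : K' → K := fun C => ⟨C.1.map (SimpleGraph.Hom.ofLE hle), hmem C⟩
  have key : ∀ C D : K', φ C = φ D → C ≠ D →
      (C.1 = Ca ∨ C.1 = G'.connectedComponentMk b) := by
    rintro ⟨C, vC, hvC, hC⟩ ⟨D, vD, hvD, hD⟩ hφ hne
    have hmap : C.map (SimpleGraph.Hom.ofLE hle) = D.map (SimpleGraph.Hom.ofLE hle) :=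
      congrArg Subtype.val hφ
    subst hC hD
    rw [SimpleGraph.ConnectedComponent.map_mk, SimpleGraph.ConnectedComponent.map_mk] at hmap
    have hreach : G.Reachable vC vD := SimpleGraph.ConnectedComponent.exact hmap
    obtain ⟨p⟩ := hreach
    rcases walk_delete (a := a) (b := b) p with h1 | h1 | h1
    · exact absurd (Subtype.ext (SimpleGraph.ConnectedComponent.sound h1)) hne
    · exact Or.inl (SimpleGraph.ConnectedComponent.sound h1)
    · exact Or.inr (SimpleGraph.ConnectedComponent.sound h1)
  -- φ is injective away from the class of `a`
  have hinj : Set.InjOn φ {C : K' | C.1 ≠ Ca} := by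
    rintro C hC D hD hφ
    by_contra hne
    rcases key C D hφ hne with h | h
    · exact hC h
    · rcases key D C hφ.symm (Ne.symm hne) with h' | h'
      · exact hD h'
      · exact hne (Subtype.ext (h.trans h'.symm))
  -- now count
  have h1 : Nat.card {C : K' | C.1 ≠ Ca} ≤ Nat.card K :=
    Nat.card_le_card_of_injective _ hinj.injective
  have hcompl : ({C : K' | C.1 ≠ Ca}ᶜ).ncard ≤ 1 := by
    rw [← Nat.card_coe_set_eq]
    have hsub : Subsingleton ↑({C : K' | C.1 ≠ Ca}ᶜ) := by
      constructor
      rintro ⟨C, hC⟩ ⟨D, hD⟩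
      simp only [Set.mem_compl_iff, Set.mem_setOf_eq, not_not] at hC hD
      exact Subtype.ext (Subtype.ext (hC.trans hD.symm))
    have h := Nat.card_le_card_of_injective
      (fun _ : ↑({C : K' | C.1 ≠ Ca}ᶜ) => (0 : Fin 1)) (fun x y _ => Subsingleton.elim x y)
    simpa using h
  have hsplit := Set.ncard_add_ncard_compl {C : K' | C.1 ≠ Ca} (Set.toFinite _) (Set.toFinite _)
  rw [← Nat.card_coe_set_eq, ← Nat.card_coe_set_eq] at hsplit
  rw [← Nat.card_coe_set_eq] at hcompl
  omega

lemma vert_le_edges_add_comps (n : ℕ) : ∀ (G : SimpleGraph U), G.edgeSet.ncard = n →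
    ∀ V : Finset U, (∀ v w, G.Adj v w → v ∈ V) →
    V.card ≤ n + Nat.card {C : G.ConnectedComponent //
      ∃ v ∈ V, G.connectedComponentMk v = C} := by
  classical
  induction n with
  | zero =>
    intro G hG V hsupp
    have hbot : G = ⊥ := by
      rw [← SimpleGraph.edgeSet_eq_empty]
      exact (Set.ncard_eq_zero (Set.toFinite _)).mp hG
    subst hbot
    have hinj : Function.Injective (fun x : {x // x ∈ V} =>
        (⟨(⊥ : SimpleGraph U).connectedComponentMk x.1, x.1, x.2, rfl⟩ :
          {C : (⊥ : SimpleGraph U).ConnectedComponent //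
            ∃ v ∈ V, (⊥ : SimpleGraph U).connectedComponentMk v = C})) := by
      intro x y h
      have := SimpleGraph.ConnectedComponent.exact (congrArg Subtype.val h)
      exact Subtype.ext (SimpleGraph.reachable_bot.mp this)
    have := Nat.card_le_card_of_injective _ hinj
    simpa [Nat.card_eq_fintype_card, Fintype.card_coe] using this
  | succ n ih =>
    intro G hG V hsupp
    have hne : G.edgeSet.Nonempty := by
      rw [Set.nonempty_iff_ne_empty]
      intro h
      rw [h, Set.ncard_empty] at hG
      omega
    obtain ⟨e, he⟩ := hne
    induction e with
    | _ a b =>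
    set G' := G.deleteEdges {s(a,b)} with hG'def
    have hG'e : G'.edgeSet.ncard = n := by
      rw [hG'def, SimpleGraph.edgeSet_deleteEdges]
      rw [← Set.ncard_diff_singleton_add_one he (Set.toFinite _)] at hG
      omega
    have hsupp' : ∀ v w, G'.Adj v w → v ∈ V := by
      intro v w h
      rw [hG'def, SimpleGraph.deleteEdges_adj] at h
      exact hsupp v w h.1
    have h1 := ih G' hG'e V hsupp'
    have h2 := comp_delete G a b V
    rw [← hG'def] at h2
    omega

lemma det_lemma (G : SimpleGraph U) (V S : Finset U) (hSV : S ⊆ V)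
    (hsupp : ∀ v w, G.Adj v w → v ∈ V)
    (hdeg : ∀ v, (G.neighborSet v).ncard ≤ 2) :
    3 * S.card ≤ 2 * V.card +
      2 * Nat.card {C : G.ConnectedComponent // ∃ v ∈ V, G.connectedComponentMk v = C} +
      ({v | v ∈ S ∧ 2 ≤ (G.neighborSet v ∩ ↑S).ncard}).ncard := by
  classical
  -- degree facts
  have hncard : ∀ v, (G.neighborSet v).ncard = G.degree v := by
    intro v
    rw [← Nat.card_coe_set_eq, Nat.card_eq_fintype_card,
      SimpleGraph.card_neighborSet_eq_degree]
  have hdeg2 : ∀ v, G.degree v ≤ 2 := fun v => hncard v ▸ hdeg v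
  set a : U → ℕ := fun v => (G.neighborFinset v ∩ S).card with ha
  -- rewrite T
  have hT : {v | v ∈ S ∧ 2 ≤ (G.neighborSet v ∩ ↑S).ncard} =
      ↑(S.filter (fun v => 2 ≤ a v)) := by
    ext v
    simp only [Set.mem_setOf_eq, Finset.coe_filter, ha]
    have : (G.neighborSet v ∩ ↑S).ncard = (G.neighborFinset v ∩ S).card := by
      rw [← Set.ncard_coe_finset, Finset.coe_inter, SimpleGraph.coe_neighborFinset]
    rw [this]
  rw [hT, Set.ncard_coe_finset]
  set T := S.filter (fun v => 2 ≤ a v) with hTdef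
  -- (1)
  have h1 : ∑ v ∈ S, a v ≤ S.card + T.card := by
    calc ∑ v ∈ S, a v ≤ ∑ v ∈ S, (1 + if 2 ≤ a v then 1 else 0) := by
          apply Finset.sum_le_sum
          intro v hv
          have hav : a v ≤ 2 := by
            have : G.neighborFinset v ∩ S ⊆ G.neighborFinset v := Finset.inter_subset_left
            calc a v ≤ (G.neighborFinset v).card := Finset.card_le_card this
              _ = G.degree v := rfl
              _ ≤ 2 := hdeg2 v
          by_cases h : 2 ≤ a v <;> simp [h] <;> omega
      _ = S.card + T.card := by
          rw [Finset.sum_add_distrib, Finset.sum_const, smul_eq_mul, mul_one, hTdef,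
            Finset.card_filter]
  -- (2) double counting
  have hNsub : ∀ v, v ∈ S → G.neighborFinset v \ S = (V \ S).filter (fun w => G.Adj v w) := by
    intro v _
    ext w
    simp only [Finset.mem_sdiff, SimpleGraph.mem_neighborFinset, Finset.mem_filter]
    constructor
    · rintro ⟨hadj, hw⟩
      exact ⟨⟨hsupp w v hadj.symm, hw⟩, hadj⟩
    · rintro ⟨⟨_, hw⟩, hadj⟩
      exact ⟨hadj, hw⟩
  have h2 : ∑ v ∈ S, G.degree v ≤ ∑ v ∈ S, a v + 2 * (V \ S).card := by
    have hsplit : ∀ v ∈ S, G.degree v = a v + (G.neighborFinset v \ S).card := by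
      intro v _
      rw [ha]
      exact (Finset.card_inter_add_card_sdiff _ _).symm
    rw [Finset.sum_congr rfl hsplit, Finset.sum_add_distrib]
    have : ∑ v ∈ S, (G.neighborFinset v \ S).card ≤ 2 * (V \ S).card := by
      have e1 : ∑ v ∈ S, (G.neighborFinset v \ S).card =
          ∑ v ∈ S, ∑ w ∈ V \ S, (if G.Adj v w then 1 else 0) := by
        apply Finset.sum_congr rfl
        intro v hv
        rw [hNsub v hv, Finset.card_filter]
      rw [e1, Finset.sum_comm]
      have e2 : ∀ w ∈ V \ S, ∑ v ∈ S, (if G.Adj v w then 1 else 0) ≤ 2 := by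
        intro w _
        rw [← Finset.card_filter]
        have hsub : S.filter (fun v => G.Adj v w) ⊆ G.neighborFinset w := by
          intro v hv
          rw [SimpleGraph.mem_neighborFinset]
          exact (Finset.mem_filter.mp hv).2.symm
        calc (S.filter (fun v => G.Adj v w)).card ≤ (G.neighborFinset w).card :=
              Finset.card_le_card hsub
          _ ≤ 2 := hdeg2 w
      calc ∑ w ∈ V \ S, ∑ v ∈ S, (if G.Adj v w then 1 else 0)
          ≤ ∑ _w ∈ V \ S, 2 := Finset.sum_le_sum e2
        _ = 2 * (V \ S).card := by rw [Finset.sum_const, smul_eq_mul, mul_comm]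
    omega
  -- (3)
  have h3 : ∑ v ∈ V, G.degree v ≤ ∑ v ∈ S, G.degree v + 2 * (V \ S).card := by
    rw [← Finset.sum_sdiff hSV]
    have : ∑ v ∈ V \ S, G.degree v ≤ 2 * (V \ S).card := by
      calc ∑ v ∈ V \ S, G.degree v ≤ ∑ _v ∈ V \ S, 2 := Finset.sum_le_sum fun v _ => hdeg2 v
        _ = 2 * (V \ S).card := by rw [Finset.sum_const, smul_eq_mul, mul_comm]
    omega
  -- (4)
  have h4 : 2 * V.card ≤ ∑ v ∈ V, G.degree v +
      2 * Nat.card {C : G.ConnectedComponent // ∃ v ∈ V, G.connectedComponentMk v = C} := by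
    have he : G.edgeSet.ncard = G.edgeFinset.card := by
      rw [← SimpleGraph.coe_edgeFinset, Set.ncard_coe_finset]
    have hvle := vert_le_edges_add_comps G.edgeFinset.card G he V hsupp
    have hsum : ∑ v ∈ V, G.degree v = 2 * G.edgeFinset.card := by
      rw [← SimpleGraph.sum_degrees_eq_twice_card_edges]
      apply Finset.sum_subset (Finset.subset_univ V)
      intro v _ hv
      have hempty : G.neighborFinset v = ∅ := by
        ext w
        simp only [SimpleGraph.mem_neighborFinset, Finset.notMem_empty, iff_false]
        exact fun h => hv (hsupp v w h)
      simp [SimpleGraph.degree, hempty]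
    omega
  -- combine
  have hc : (V \ S).card = V.card - S.card := Finset.card_sdiff_of_subset hSV
  have hcard := Finset.card_le_card hSV
  omega

end Aux

/-- Triples lemma (random version): `S ⊆ V ⊆ U` are random subsets of a fixed finite
universe `U`, and on `V` there is a (random) graph all of whose connected components are
paths or cycles (equivalently all degrees are at most 2), with `k` components. If
`Pr[I ∈ S | I ∈ V] ≥ p > 2/3` for every `I ∈ U`, then
`E[|V|] ≤ (2E[k] + E[|T^S|])/(3p-2)`, where `T^S` is the set of vertices of `S` with
at least two neighbors in `S`. -/
theorem stmt_9 {Ω : Type*} [MeasurableSpace Ω] (μ : Measure Ω) [IsProbabilityMeasure μ]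
    {U : Type*} [Fintype U] [DecidableEq U]
    (V S : Ω → Finset U) (G : Ω → SimpleGraph U) (p : ℝ) (hp : 2 / 3 < p)
    (hSV : ∀ ω, S ω ⊆ V ω)
    (hsupp : ∀ ω v w, (G ω).Adj v w → v ∈ V ω)
    (hdeg : ∀ ω v, ((G ω).neighborSet v).ncard ≤ 2)
    (hcond : ∀ I : U, p * (μ {ω | I ∈ V ω}).toReal ≤ (μ {ω | I ∈ S ω}).toReal)
    (hmV : ∀ I : U, MeasurableSet {ω | I ∈ V ω})
    (hmS : ∀ I : U, MeasurableSet {ω | I ∈ S ω})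
    (hintV : Integrable (fun ω => ((V ω).card : ℝ)) μ)
    (hintk : Integrable (fun ω =>
      (Nat.card {C : (G ω).ConnectedComponent //
        ∃ v ∈ V ω, (G ω).connectedComponentMk v = C} : ℝ)) μ)
    (hintT : Integrable (fun ω =>
      (Set.ncard {v | v ∈ S ω ∧ 2 ≤ ((G ω).neighborSet v ∩ ↑(S ω)).ncard} : ℝ)) μ) :
    (∫ ω, ((V ω).card : ℝ) ∂μ) ≤
      (2 * (∫ ω, (Nat.card {C : (G ω).ConnectedComponent //
            ∃ v ∈ V ω, (G ω).connectedComponentMk v = C} : ℝ) ∂μ) +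
        (∫ ω, (Set.ncard {v | v ∈ S ω ∧
            2 ≤ ((G ω).neighborSet v ∩ ↑(S ω)).ncard} : ℝ) ∂μ)) / (3 * p - 2) := by
  classical
  set kf : Ω → ℝ := fun ω => (Nat.card {C : (G ω).ConnectedComponent //
      ∃ v ∈ V ω, (G ω).connectedComponentMk v = C} : ℝ) with hkf
  set Tf : Ω → ℝ := fun ω => (Set.ncard {v | v ∈ S ω ∧
      2 ≤ ((G ω).neighborSet v ∩ ↑(S ω)).ncard} : ℝ) with hTf
  -- representation of card as a sum of indicators
  have hreprS : ∀ ω, ((S ω).card : ℝ) =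
      ∑ I : U, Set.indicator {ω' | I ∈ S ω'} (fun _ => (1:ℝ)) ω := by
    intro ω
    have : ∀ I : U, Set.indicator {ω' | I ∈ S ω'} (fun _ => (1:ℝ)) ω =
        if I ∈ S ω then 1 else 0 := by
      intro I
      simp [Set.indicator_apply]
    rw [Finset.sum_congr rfl fun I _ => this I, Finset.sum_boole]
    simp
  have hreprV : ∀ ω, ((V ω).card : ℝ) =
      ∑ I : U, Set.indicator {ω' | I ∈ V ω'} (fun _ => (1:ℝ)) ω := by
    intro ω
    have : ∀ I : U, Set.indicator {ω' | I ∈ V ω'} (fun _ => (1:ℝ)) ω =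
        if I ∈ V ω then 1 else 0 := by
      intro I
      simp [Set.indicator_apply]
    rw [Finset.sum_congr rfl fun I _ => this I, Finset.sum_boole]
    simp
  have hintInd : ∀ (W : Ω → Finset U), (∀ I : U, MeasurableSet {ω | I ∈ W ω}) →
      ∀ I : U, Integrable (Set.indicator {ω' | I ∈ W ω'} (fun _ => (1:ℝ))) μ := by
    intro W hm I
    exact (integrable_const (1:ℝ)).indicator (hm I)
  have hintS : Integrable (fun ω => ((S ω).card : ℝ)) μ := by
    have : (fun ω => ((S ω).card : ℝ)) =
        fun ω => ∑ I : U, Set.indicator {ω' | I ∈ S ω'} (fun _ => (1:ℝ)) ω := funext hreprS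
    rw [this]
    exact integrable_finset_sum _ fun I _ => hintInd S hmS I
  have hEcard : ∀ (W : Ω → Finset U) (hm : ∀ I : U, MeasurableSet {ω | I ∈ W ω}),
      (∀ ω, ((W ω).card : ℝ) = ∑ I : U, Set.indicator {ω' | I ∈ W ω'} (fun _ => (1:ℝ)) ω) →
      ∫ ω, ((W ω).card : ℝ) ∂μ = ∑ I : U, (μ {ω | I ∈ W ω}).toReal := by
    intro W hm hrepr
    calc ∫ ω, ((W ω).card : ℝ) ∂μ
        = ∫ ω, ∑ I : U, Set.indicator {ω' | I ∈ W ω'} (fun _ => (1:ℝ)) ω ∂μ := by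
          exact integral_congr_ae (Filter.Eventually.of_forall hrepr)
      _ = ∑ I : U, ∫ ω, Set.indicator {ω' | I ∈ W ω'} (fun _ => (1:ℝ)) ω ∂μ :=
          integral_finset_sum _ fun I _ => hintInd W hm I
      _ = ∑ I : U, (μ {ω | I ∈ W ω}).toReal := by
          refine Finset.sum_congr rfl fun I _ => ?_
          exact integral_indicator_one (hm I)
  have hES := hEcard S hmS hreprS
  have hEV := hEcard V hmV hreprV
  have hpS : p * ∫ ω, ((V ω).card : ℝ) ∂μ ≤ ∫ ω, ((S ω).card : ℝ) ∂μ := by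
    rw [hES, hEV, Finset.mul_sum]
    exact Finset.sum_le_sum fun I _ => hcond I
  have hpt : ∀ ω, 3 * ((S ω).card : ℝ) ≤
      2 * ((V ω).card : ℝ) + (2 * kf ω + Tf ω) := by
    intro ω
    have h := det_lemma (G ω) (V ω) (S ω) (hSV ω) (hsupp ω) (hdeg ω)
    have h' := (Nat.cast_le (α := ℝ)).mpr h
    push_cast at h'
    rw [hkf, hTf]
    push_cast
    linarith
  have key : 3 * ∫ ω, ((S ω).card : ℝ) ∂μ ≤
      2 * ∫ ω, ((V ω).card : ℝ) ∂μ + (2 * ∫ ω, kf ω ∂μ + ∫ ω, Tf ω ∂μ) := by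
    have i1 : Integrable (fun ω => 2 * ((V ω).card : ℝ)) μ := hintV.const_mul 2
    have i3 : Integrable (fun ω => 2 * kf ω) μ := hintk.const_mul 2
    have i2 : Integrable (fun ω => 2 * kf ω + Tf ω) μ := by exact i3.add hintT
    have i0 : Integrable (fun ω => 2 * ((V ω).card : ℝ) + (2 * kf ω + Tf ω)) μ := by
      exact i1.add i2
    have hA : ∫ ω, (2 * ((V ω).card : ℝ) + (2 * kf ω + Tf ω)) ∂μ =
        2 * ∫ ω, ((V ω).card : ℝ) ∂μ + (2 * ∫ ω, kf ω ∂μ + ∫ ω, Tf ω ∂μ) := by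
      rw [integral_add i1 i2, integral_add i3 hintT, integral_const_mul, integral_const_mul]
    have hB : ∫ ω, 3 * ((S ω).card : ℝ) ∂μ = 3 * ∫ ω, ((S ω).card : ℝ) ∂μ :=
      integral_const_mul 3 _
    have h' : ∫ ω, 3 * ((S ω).card : ℝ) ∂μ ≤
        ∫ ω, (2 * ((V ω).card : ℝ) + (2 * kf ω + Tf ω)) ∂μ :=
      integral_mono (hintS.const_mul 3) i0 hpt
    rw [hA, hB] at h'
    exact h'
  rw [le_div_iff₀ (by linarith : (0:ℝ) < 3 * p - 2)]
  have hring : (∫ ω, ((V ω).card : ℝ) ∂μ) * (3 * p - 2) =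
      3 * (p * ∫ ω, ((V ω).card : ℝ) ∂μ) - 2 * ∫ ω, ((V ω).card : ℝ) ∂μ := by ring
  rw [hring]
  linarith [hpS, key]
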